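/- arXiv:2309.05871 — 4 statements merged into one kernel-verified Lean document; each statement's English description precedes it below -/
import Mathlib

section
/- For every ε ≥ 0, every δ with 0 ≤ δ ≤ 1, and every distribution p on V, the vector T_{ε,δ}(p) is again a distribution on V; equivalently, the modified prefix sums s'_k = min{1, min{e^ε·s_k, 1 − e^{−ε}(1 − s_k)} + δ} are nondecreasing in k and satisfy s'_q = 1, so the entries of T_{ε,δ}(p) are nonnegative and sum to 1. -/
open Finset

/-- Prefix sum `s_k = p_1 + ⋯ + p_k` (0-indexed internally: sum of entries with index `< k`). -/
noncomputable def prefixSum (q : ℕ) (p : Fin q → ℝ) (k : ℕ) : ℝ :=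
  ∑ i ∈ Finset.univ.filter (fun i : Fin q => (i : ℕ) < k), p i

/-- `p` is a probability distribution on `V = {1, …, q}`. -/
def IsDist (q : ℕ) (p : Fin q → ℝ) : Prop :=
  (∀ k, 0 ≤ p k) ∧ ∑ k, p k = 1

/-- The modified prefix sums `s'_k` defining the operator `T_{ε,δ}`:
`s'_0 = 0` and `s'_k = min {1, min {e^ε s_k, 1 - e^{-ε} (1 - s_k)} + δ}` for `k ≥ 1`. -/
noncomputable def sPrime (ε δ : ℝ) (q : ℕ) (p : Fin q → ℝ) (k : ℕ) : ℝ :=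
  if k = 0 then 0
  else min 1 (min (Real.exp ε * prefixSum q p k)
      (1 - Real.exp (-ε) * (1 - prefixSum q p k)) + δ)

/-- The operator `T_{ε,δ}`: `(T_{ε,δ} p)_k = s'_k - s'_{k-1}`. -/
noncomputable def Tmap (ε δ : ℝ) (q : ℕ) (p : Fin q → ℝ) : Fin q → ℝ :=
  fun k => sPrime ε δ q p ((k : ℕ) + 1) - sPrime ε δ q p (k : ℕ)

/-- `P` and `Q` are `(ε,δ)`-close: for every `S ⊆ V`,
`P(S) ≤ e^ε Q(S) + δ` and `Q(S) ≤ e^ε P(S) + δ`. -/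
def Close (ε δ : ℝ) (q : ℕ) (P Q : Fin q → ℝ) : Prop :=
  ∀ S : Finset (Fin q),
    (∑ k ∈ S, P k) ≤ Real.exp ε * (∑ k ∈ S, Q k) + δ ∧
    (∑ k ∈ S, Q k) ≤ Real.exp ε * (∑ k ∈ S, P k) + δ

/-- Dominance ordering: `x ⪯ y` iff every prefix sum of `x` is at most that of `y`. -/
def Dom (q : ℕ) (x y : Fin q → ℝ) : Prop :=
  ∀ k : ℕ, k ≤ q → prefixSum q x k ≤ prefixSum q y k

/-- For ε ≥ 0, 0 ≤ δ ≤ 1, and any distribution `p`, `T_{ε,δ}(p)` is again a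
distribution; equivalently, the modified prefix sums are nondecreasing (up to index `q`)
and `s'_q = 1`. -/
theorem Tmap_isDist (q : ℕ) (hq : 1 ≤ q) (ε δ : ℝ) (hε : 0 ≤ ε) (hδ0 : 0 ≤ δ) (hδ1 : δ ≤ 1)
    (p : Fin q → ℝ) (hp : IsDist q p) :
    IsDist q (Tmap ε δ q p) ∧
    (∀ j k : ℕ, j ≤ k → k ≤ q → sPrime ε δ q p j ≤ sPrime ε δ q p k) ∧
    sPrime ε δ q p q = 1 := by
  obtain ⟨hpos, hsum⟩ := hp
  have hps_mono : ∀ j k : ℕ, j ≤ k → prefixSum q p j ≤ prefixSum q p k := by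
    intro j k hjk
    apply Finset.sum_le_sum_of_subset_of_nonneg
    · intro i hi
      simp only [Finset.mem_filter, Finset.mem_univ, true_and] at *
      omega
    · intro i _ _; exact hpos i
  have hps_nonneg : ∀ k : ℕ, 0 ≤ prefixSum q p k := by
    intro k
    exact Finset.sum_nonneg (fun i _ => hpos i)
  have hps_q : prefixSum q p q = 1 := by
    rw [← hsum]
    unfold prefixSum
    apply Finset.sum_congr _ (fun _ _ => rfl)
    ext i
    simp [i.isLt]
  have hps_le1 : ∀ k : ℕ, prefixSum q p k ≤ 1 := by
    intro k
    rcases le_or_gt k q with h | h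
    · calc prefixSum q p k ≤ prefixSum q p q := hps_mono k q h
        _ = 1 := hps_q
    · have heq : prefixSum q p k = prefixSum q p q := by
        unfold prefixSum
        apply Finset.sum_congr _ (fun _ _ => rfl)
        ext i
        have := i.isLt
        simp only [Finset.mem_filter, Finset.mem_univ, true_and]
        omega
      rw [heq, hps_q]
  have hexp1 : 1 ≤ Real.exp ε := Real.one_le_exp hε
  have hexpneg : Real.exp (-ε) ≤ 1 := Real.exp_le_one_iff.mpr (by linarith)
  have hexpnegpos : 0 < Real.exp (-ε) := Real.exp_pos _
  -- s' is nonneg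
  have hs'_nonneg : ∀ k : ℕ, 0 ≤ sPrime ε δ q p k := by
    intro k
    unfold sPrime
    split
    · exact le_refl 0
    · apply le_min (by norm_num)
      have h1 : 0 ≤ Real.exp ε * prefixSum q p k :=
        mul_nonneg (Real.exp_pos _).le (hps_nonneg k)
      have h2 : 0 ≤ 1 - Real.exp (-ε) * (1 - prefixSum q p k) := by
        have : Real.exp (-ε) * (1 - prefixSum q p k) ≤ 1 * 1 := by
          apply mul_le_mul hexpneg (by linarith [hps_nonneg k]) (by linarith [hps_le1 k]) (by norm_num)
        linarith
      have := le_min h1 h2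
      linarith
  -- s' monotone
  have hs'_mono : ∀ j k : ℕ, j ≤ k → sPrime ε δ q p j ≤ sPrime ε δ q p k := by
    intro j k hjk
    rcases Nat.eq_zero_or_pos j with hj | hj
    · rw [hj]; simpa [sPrime] using hs'_nonneg k
    · have hk : k ≠ 0 := by omega
      have hsm := hps_mono j k hjk
      unfold sPrime
      rw [if_neg (by omega), if_neg hk]
      apply min_le_min le_rfl
      apply add_le_add_left
      apply min_le_min
      · exact mul_le_mul_of_nonneg_left hsm (Real.exp_pos _).le
      · nlinarith
  have hs'_q : sPrime ε δ q p q = 1 := by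
    unfold sPrime
    rw [if_neg (by omega), hps_q]
    simp only [sub_self, mul_zero, mul_one, sub_zero]
    rw [min_eq_right hexp1]
    exact min_eq_left (by linarith)
  refine ⟨⟨?_, ?_⟩, fun j k hjk _ => hs'_mono j k hjk, hs'_q⟩
  · intro k
    simp only [Tmap, sub_nonneg]
    exact hs'_mono k (k + 1) (Nat.le_succ k)
  · unfold Tmap
    rw [Fin.sum_univ_eq_sum_range (fun k => sPrime ε δ q p (k + 1) - sPrime ε δ q p k)]
    rw [Finset.sum_range_sub (fun k => sPrime ε δ q p k)]
    rw [hs'_q]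
    simp [sPrime]
end

section
/- For every ε ≥ 0 and every distribution p on V, the distribution p̃ = T_{ε,0}(p) satisfies the pointwise bounds e^{−ε}·p_k ≤ p̃_k ≤ e^ε·p_k for every 1 ≤ k ≤ q. -/
open Finset

lemma prefixSum_succ (q : ℕ) (p : Fin q → ℝ) (k : Fin q) :
    prefixSum q p ((k : ℕ) + 1) = prefixSum q p (k : ℕ) + p k := by
  unfold prefixSum
  have hset : Finset.univ.filter (fun i : Fin q => (i : ℕ) < (k : ℕ) + 1)
      = insert k (Finset.univ.filter (fun i : Fin q => (i : ℕ) < (k : ℕ))) := by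
    ext i
    simp [Nat.lt_succ_iff_lt_or_eq, Fin.ext_iff, or_comm]
    rw [Fin.le_iff_val_le_val, Fin.lt_iff_val_lt_val]; omega
  rw [hset, Finset.sum_insert (by simp)]
  ring

lemma prefixSum_le_one (q : ℕ) (p : Fin q → ℝ) (hp : IsDist q p) (k : ℕ) :
    prefixSum q p k ≤ 1 := by
  have := Finset.sum_le_sum_of_subset_of_nonneg
    (Finset.filter_subset (fun i : Fin q => (i : ℕ) < k) Finset.univ)
    (fun i _ _ => hp.1 i)
  calc prefixSum q p k ≤ ∑ i, p i := this
    _ = 1 := hp.2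

lemma sPrime_eq (ε : ℝ) (hε : 0 ≤ ε) (q : ℕ) (p : Fin q → ℝ) (hp : IsDist q p) (k : ℕ) :
    sPrime ε 0 q p k = min (Real.exp ε * prefixSum q p k)
      (1 - Real.exp (-ε) * (1 - prefixSum q p k)) := by
  have hs1 : prefixSum q p k ≤ 1 := prefixSum_le_one q p hp k
  have hexp : (0:ℝ) < Real.exp (-ε) := Real.exp_pos _
  rcases Nat.eq_zero_or_pos k with h0 | hpos
  · subst h0
    have h : prefixSum q p 0 = 0 := by simp [prefixSum]
    rw [sPrime, if_pos rfl, h]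
    have h1 : Real.exp (-ε) ≤ 1 := Real.exp_le_one_iff.mpr (by linarith)
    rw [min_eq_left (by nlinarith)]
    ring
  · rw [sPrime, if_neg (Nat.pos_iff_ne_zero.mp hpos), add_zero]
    apply min_eq_right
    have : 1 - Real.exp (-ε) * (1 - prefixSum q p k) ≤ 1 := by nlinarith
    exact le_trans (min_le_right _ _) this

lemma key_bounds (e1 e2 s d : ℝ) (h2 : 0 ≤ e2) (he : e2 ≤ e1) (hd : 0 ≤ d) :
    e2 * d ≤ min (e1*(s+d)) (1 - e2*(1-(s+d))) - min (e1*s) (1 - e2*(1-s)) ∧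
    min (e1*(s+d)) (1 - e2*(1-(s+d))) - min (e1*s) (1 - e2*(1-s)) ≤ e1 * d := by
  constructor
  · rcases le_total (e1*(s+d)) (1 - e2*(1-(s+d))) with h | h
    · rw [min_eq_left h]
      have h3 : min (e1*s) (1 - e2*(1-s)) ≤ e1*s := min_le_left _ _
      nlinarith [mul_nonneg (sub_nonneg.mpr he) hd]
    · rw [min_eq_right h]
      have h3 : min (e1*s) (1 - e2*(1-s)) ≤ 1 - e2*(1-s) := min_le_right _ _
      nlinarith
  · rcases le_total (e1*s) (1 - e2*(1-s)) with h | h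
    · rw [min_eq_left h]
      have h3 : min (e1*(s+d)) (1 - e2*(1-(s+d))) ≤ e1*(s+d) := min_le_left _ _
      nlinarith
    · rw [min_eq_right h]
      have h3 : min (e1*(s+d)) (1 - e2*(1-(s+d))) ≤ 1 - e2*(1-(s+d)) := min_le_right _ _
      nlinarith [mul_nonneg (sub_nonneg.mpr he) hd]

/-- For ε ≥ 0 and any distribution `p`, the distribution `p̃ = T_{ε,0}(p)`
satisfies `e^{-ε} p_k ≤ p̃_k ≤ e^ε p_k` for every `k`. -/
theorem Tmap_pointwise_bounds (q : ℕ) (hq : 1 ≤ q) (ε : ℝ) (hε : 0 ≤ ε)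
    (p : Fin q → ℝ) (hp : IsDist q p) :
    ∀ k : Fin q,
      Real.exp (-ε) * p k ≤ Tmap ε 0 q p k ∧ Tmap ε 0 q p k ≤ Real.exp ε * p k := by
  intro k
  have hstep := prefixSum_succ q p k
  have hpk : 0 ≤ p k := hp.1 k
  have hee : Real.exp (-ε) ≤ Real.exp ε := Real.exp_le_exp.mpr (by linarith)
  have hT : Tmap ε 0 q p k =
      min (Real.exp ε * (prefixSum q p (k:ℕ) + p k))
        (1 - Real.exp (-ε) * (1 - (prefixSum q p (k:ℕ) + p k))) -
      min (Real.exp ε * prefixSum q p (k:ℕ))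
        (1 - Real.exp (-ε) * (1 - prefixSum q p (k:ℕ))) := by
    rw [Tmap, sPrime_eq ε hε q p hp, sPrime_eq ε hε q p hp, hstep]
  rw [hT]
  exact key_bounds (Real.exp ε) (Real.exp (-ε)) (prefixSum q p (k:ℕ)) (p k)
    (Real.exp_nonneg _) hee hpk
end

section
/- For every ε ≥ 0, every δ with 0 ≤ δ ≤ 1, and every distribution p on V, the total variation distance between T_{ε,0}(p) and T_{ε,δ}(p) is at most δ. -/
open Finset

/-- For ε ≥ 0, 0 ≤ δ ≤ 1, and any distribution `p`, the total variation
distance between `T_{ε,0}(p)` and `T_{ε,δ}(p)` is at most `δ`, i.e. for every subset `S`,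
`|T_{ε,0}(p)(S) − T_{ε,δ}(p)(S)| ≤ δ`. -/
theorem Tmap_tv_le (q : ℕ) (hq : 1 ≤ q) (ε δ : ℝ) (hε : 0 ≤ ε) (hδ0 : 0 ≤ δ) (hδ1 : δ ≤ 1)
    (p : Fin q → ℝ) (hp : IsDist q p) :
    ∀ S : Finset (Fin q),
      |(∑ k ∈ S, Tmap ε 0 q p k) - (∑ k ∈ S, Tmap ε δ q p k)| ≤ δ := by
  obtain ⟨hp0, -⟩ := hp
  haveI : NeZero q := ⟨by omega⟩
  -- difference of modified prefix sums
  set d : ℕ → ℝ := fun k => sPrime ε δ q p k - sPrime ε 0 q p k with hd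
  set m : ℕ → ℝ := fun k => min (Real.exp ε * prefixSum q p k)
      (1 - Real.exp (-ε) * (1 - prefixSum q p k)) with hm
  have hmin : ∀ x : ℝ, min 1 (x + δ) - min 1 x = min δ (max 0 (1 - x)) := by
    intro x
    rcases le_total (x + δ) 1 with h | h <;> rcases le_total x 1 with h2 | h2 <;>
      simp [min_def, max_def] <;> split_ifs <;> linarith
  have hs_mono : ∀ j k : ℕ, j ≤ k → prefixSum q p j ≤ prefixSum q p k := by
    intro j k hjk
    apply Finset.sum_le_sum_of_subset_of_nonneg
    · intro i hi
      simp only [Finset.mem_filter, Finset.mem_univ, true_and] at hi ⊢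
      omega
    · intro i _ _; exact hp0 i
  have hm_mono : ∀ j k : ℕ, j ≤ k → m j ≤ m k := by
    intro j k hjk
    have := hs_mono j k hjk
    have he : (0:ℝ) ≤ Real.exp ε := (Real.exp_pos ε).le
    have he' : (0:ℝ) ≤ Real.exp (-ε) := (Real.exp_pos (-ε)).le
    exact min_le_min (by nlinarith) (by nlinarith)
  have hd_eq : ∀ k : ℕ, k ≠ 0 → d k = min δ (max 0 (1 - m k)) := by
    intro k hk
    simp only [hd, sPrime, hk, if_false, ← hm, add_zero]
    exact hmin (m k)
  have hd0 : d 0 = 0 := by simp [hd, sPrime]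
  have hd_nonneg : ∀ k : ℕ, 0 ≤ d k := by
    intro k
    rcases eq_or_ne k 0 with rfl | hk
    · simp [hd0]
    · rw [hd_eq k hk]; exact le_min hδ0 (le_max_left _ _)
  have hd_le : ∀ k : ℕ, k ≠ 0 → d k ≤ δ := by
    intro k hk; rw [hd_eq k hk]; exact min_le_left _ _
  have hd_anti : ∀ j k : ℕ, j ≠ 0 → j ≤ k → d k ≤ d j := by
    intro j k hj hjk
    rw [hd_eq j hj, hd_eq k (by omega)]
    exact min_le_min le_rfl (max_le_max le_rfl (by linarith [hm_mono j k hjk]))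
  -- the per-coordinate difference
  set F : Fin q → ℝ := fun k => d (k : ℕ) - d ((k : ℕ) + 1) with hF
  have hdiff : ∀ S : Finset (Fin q),
      (∑ k ∈ S, Tmap ε 0 q p k) - (∑ k ∈ S, Tmap ε δ q p k) = ∑ k ∈ S, F k := by
    intro S
    rw [← Finset.sum_sub_distrib]
    apply Finset.sum_congr rfl
    intro k _
    simp only [Tmap, hF, hd]
    ring
  have hF_nonneg : ∀ k : Fin q, k ≠ 0 → 0 ≤ F k := by
    intro k hk
    have hk' : (k : ℕ) ≠ 0 := by
      exact Fin.val_ne_zero_iff.mpr hk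
    have := hd_anti (k : ℕ) ((k : ℕ) + 1) hk' (by omega)
    simp only [hF]; linarith
  have hF0 : F 0 = -d 1 := by
    simp [hF, hd0, Fin.val_zero]
  have htel : ∑ k : Fin q, F k = d 0 - d q := by
    rw [Fin.sum_univ_eq_sum_range (fun i => d i - d (i + 1)) q]
    exact Finset.sum_range_sub' d q
  intro S
  rw [hdiff S, abs_le]
  have herase_le : ∑ k ∈ S.erase 0, F k ≤ d 1 - d q := by
    calc ∑ k ∈ S.erase 0, F k ≤ ∑ k ∈ Finset.univ.erase (0 : Fin q), F k := by
          apply Finset.sum_le_sum_of_subset_of_nonneg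
          · intro i hi
            simp only [Finset.mem_erase] at hi ⊢
            exact ⟨hi.1, Finset.mem_univ i⟩
          · intro i hi _
            exact hF_nonneg i (Finset.ne_of_mem_erase hi)
      _ = ∑ k : Fin q, F k - F 0 := by
          rw [← Finset.add_sum_erase _ F (Finset.mem_univ (0 : Fin q))]; ring
      _ = d 1 - d q := by rw [htel, hF0, hd0]; ring
  have herase_nonneg : 0 ≤ ∑ k ∈ S.erase 0, F k := by
    apply Finset.sum_nonneg
    intro i hi
    exact hF_nonneg i (Finset.ne_of_mem_erase hi)
  have hd1le : d 1 ≤ δ := hd_le 1 one_ne_zero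
  have hdq : 0 ≤ d q := hd_nonneg q
  have hd1nn : 0 ≤ d 1 := hd_nonneg 1
  by_cases h0 : (0 : Fin q) ∈ S
  · rw [← Finset.add_sum_erase _ F h0, hF0]
    constructor <;> linarith
  · rw [Finset.erase_eq_of_notMem h0] at herase_le herase_nonneg
    constructor <;> linarith
end

section
/- (Nonexistence of an optimal mechanism under a non-homogeneous boundary condition.) Let q = 3, V = {1,2,3}, ε = ln 2, δ = 0. Let D = {d₁, d₂, d₃, d₄, d₅} with the 5-cycle neighborhood relation d₁ ∼ d₂ ∼ d₃ ∼ d₄ ∼ d₅ ∼ d₁, and rainbows f(dᵢ) = (1,2,3) for 1 ≤ i ≤ 4 and f(d₅) = (1,3,2). Consider the constraints M(d₁) = (0.2, 0.1, 0.7) and M(d₄) = (0.4, 0.1, 0.5), where a triple (a,b,c) lists the probabilities of outputs 1, 2, 3 respectively. Then: (a) there exists an (ln 2, 0)-DP mechanism on (D, ∼) satisfying both constraints; and (b) there is no (ln 2, 0)-DP mechanism M satisfying both constraints that dominates every (ln 2, 0)-DP mechanism satisfying both constraints. -/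
open Finset

/-- The 5-cycle neighborhood relation `d₁ ∼ d₂ ∼ d₃ ∼ d₄ ∼ d₅ ∼ d₁` on `Fin 5`
(indices `0,…,4` standing for `d₁,…,d₅`). -/
def cycleRel (i j : Fin 5) : Prop := j = i + 1 ∨ i = j + 1

/-- The rainbows of Example `eg:no-optimal`: `f(dᵢ) = (1,2,3)` for `1 ≤ i ≤ 4` (the identity
permutation of `Fin 3`) and `f(d₅) = (1,3,2)` (the permutation swapping the 2nd and 3rd
preference positions). -/
noncomputable def rainbow5 (i : Fin 5) : Equiv.Perm (Fin 3) :=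
  if i = 4 then Equiv.swap 1 2 else 1

/-- `M` is an `(ln 2, 0)`-DP mechanism on the 5-cycle satisfying the two boundary
constraints `M(d₁) = (0.2, 0.1, 0.7)` and `M(d₄) = (0.4, 0.1, 0.5)`. -/
def GoodMech (M : Fin 5 → Fin 3 → ℝ) : Prop :=
  (∀ d, IsDist 3 (M d)) ∧
  (∀ d d', cycleRel d d' → Close (Real.log 2) 0 3 (M d) (M d')) ∧
  M 0 = ![0.2, 0.1, 0.7] ∧ M 3 = ![0.4, 0.1, 0.5]


section Aux

lemma close_of_pointwise {ε : ℝ} {q : ℕ} {P Q : Fin q → ℝ}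
    (h1 : ∀ k, P k ≤ Real.exp ε * Q k) (h2 : ∀ k, Q k ≤ Real.exp ε * P k) :
    Close ε 0 q P Q := by
  intro S
  constructor
  · rw [add_zero, Finset.mul_sum]
    exact Finset.sum_le_sum (fun k _ => h1 k)
  · rw [add_zero, Finset.mul_sum]
    exact Finset.sum_le_sum (fun k _ => h2 k)

lemma close_symm {ε δ : ℝ} {q : ℕ} {P Q : Fin q → ℝ} (h : Close ε δ q P Q) :
    Close ε δ q Q P := fun S => ⟨(h S).2, (h S).1⟩

lemma exp_log_two : Real.exp (Real.log 2) = 2 := Real.exp_log (by norm_num)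

lemma prefixSum_one (p : Fin 3 → ℝ) : prefixSum 3 p 1 = p 0 := by
  rw [prefixSum, Finset.sum_filter, Fin.sum_univ_three]
  norm_num

lemma prefixSum_two (p : Fin 3 → ℝ) : prefixSum 3 p 2 = p 0 + p 1 := by
  rw [prefixSum, Finset.sum_filter, Fin.sum_univ_three]
  norm_num

lemma isDist_row {a b c : ℝ} (ha : 0 ≤ a) (hb : 0 ≤ b) (hc : 0 ≤ c)
    (h : a + b + c = 1) : IsDist 3 ![a, b, c] := by
  constructor
  · intro k
    fin_cases k <;> simpa using by assumption
  · rw [Fin.sum_univ_three]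
    simpa using h

lemma close_row {a b c a' b' c' : ℝ}
    (h1 : a ≤ 2 * a') (h2 : b ≤ 2 * b') (h3 : c ≤ 2 * c')
    (h4 : a' ≤ 2 * a) (h5 : b' ≤ 2 * b) (h6 : c' ≤ 2 * c) :
    Close (Real.log 2) 0 3 ![a, b, c] ![a', b', c'] := by
  apply close_of_pointwise <;> intro k <;> fin_cases k <;>
    simpa [exp_log_two] using by assumption

noncomputable def mechA : Fin 5 → Fin 3 → ℝ :=
  ![![0.2, 0.1, 0.7], ![0.4, 0.1, 0.5], ![0.7, 0.05, 0.25],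
    ![0.4, 0.1, 0.5], ![0.4, 0.1, 0.5]]

noncomputable def mechB : Fin 5 → Fin 3 → ℝ :=
  ![![0.2, 0.1, 0.7], ![0.4, 0.2, 0.4], ![0.4, 0.15, 0.45],
    ![0.4, 0.1, 0.5], ![0.3, 0.1, 0.6]]

lemma goodA : GoodMech mechA := by
  have e0 : Close (Real.log 2) 0 3 (mechA 0) (mechA 1) := by
    show Close _ _ _ ![(0.2:ℝ),0.1,0.7] ![(0.4:ℝ),0.1,0.5]
    exact close_row (by norm_num) (by norm_num) (by norm_num)
      (by norm_num) (by norm_num) (by norm_num)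
  have e1 : Close (Real.log 2) 0 3 (mechA 1) (mechA 2) := by
    show Close _ _ _ ![(0.4:ℝ),0.1,0.5] ![(0.7:ℝ),0.05,0.25]
    exact close_row (by norm_num) (by norm_num) (by norm_num)
      (by norm_num) (by norm_num) (by norm_num)
  have e2 : Close (Real.log 2) 0 3 (mechA 2) (mechA 3) := by
    show Close _ _ _ ![(0.7:ℝ),0.05,0.25] ![(0.4:ℝ),0.1,0.5]
    exact close_row (by norm_num) (by norm_num) (by norm_num)
      (by norm_num) (by norm_num) (by norm_num)
  have e3 : Close (Real.log 2) 0 3 (mechA 3) (mechA 4) := by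
    show Close _ _ _ ![(0.4:ℝ),0.1,0.5] ![(0.4:ℝ),0.1,0.5]
    exact close_row (by norm_num) (by norm_num) (by norm_num)
      (by norm_num) (by norm_num) (by norm_num)
  have e4 : Close (Real.log 2) 0 3 (mechA 4) (mechA 0) := by
    show Close _ _ _ ![(0.4:ℝ),0.1,0.5] ![(0.2:ℝ),0.1,0.7]
    exact close_row (by norm_num) (by norm_num) (by norm_num)
      (by norm_num) (by norm_num) (by norm_num)
  refine ⟨?_, ?_, rfl, rfl⟩
  · intro d
    fin_cases d
    exacts [isDist_row (by norm_num) (by norm_num) (by norm_num) (by norm_num),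
      isDist_row (by norm_num) (by norm_num) (by norm_num) (by norm_num),
      isDist_row (by norm_num) (by norm_num) (by norm_num) (by norm_num),
      isDist_row (by norm_num) (by norm_num) (by norm_num) (by norm_num),
      isDist_row (by norm_num) (by norm_num) (by norm_num) (by norm_num)]
  · intro d d' h
    rcases h with rfl | rfl
    · fin_cases d
      exacts [e0, e1, e2, e3, e4]
    · fin_cases d'
      exacts [close_symm e0, close_symm e1, close_symm e2, close_symm e3, close_symm e4]

lemma goodB : GoodMech mechB := by
  have e0 : Close (Real.log 2) 0 3 (mechB 0) (mechB 1) := by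
    show Close _ _ _ ![(0.2:ℝ),0.1,0.7] ![(0.4:ℝ),0.2,0.4]
    exact close_row (by norm_num) (by norm_num) (by norm_num)
      (by norm_num) (by norm_num) (by norm_num)
  have e1 : Close (Real.log 2) 0 3 (mechB 1) (mechB 2) := by
    show Close _ _ _ ![(0.4:ℝ),0.2,0.4] ![(0.4:ℝ),0.15,0.45]
    exact close_row (by norm_num) (by norm_num) (by norm_num)
      (by norm_num) (by norm_num) (by norm_num)
  have e2 : Close (Real.log 2) 0 3 (mechB 2) (mechB 3) := by
    show Close _ _ _ ![(0.4:ℝ),0.15,0.45] ![(0.4:ℝ),0.1,0.5]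
    exact close_row (by norm_num) (by norm_num) (by norm_num)
      (by norm_num) (by norm_num) (by norm_num)
  have e3 : Close (Real.log 2) 0 3 (mechB 3) (mechB 4) := by
    show Close _ _ _ ![(0.4:ℝ),0.1,0.5] ![(0.3:ℝ),0.1,0.6]
    exact close_row (by norm_num) (by norm_num) (by norm_num)
      (by norm_num) (by norm_num) (by norm_num)
  have e4 : Close (Real.log 2) 0 3 (mechB 4) (mechB 0) := by
    show Close _ _ _ ![(0.3:ℝ),0.1,0.6] ![(0.2:ℝ),0.1,0.7]
    exact close_row (by norm_num) (by norm_num) (by norm_num)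
      (by norm_num) (by norm_num) (by norm_num)
  refine ⟨?_, ?_, rfl, rfl⟩
  · intro d
    fin_cases d
    exacts [isDist_row (by norm_num) (by norm_num) (by norm_num) (by norm_num),
      isDist_row (by norm_num) (by norm_num) (by norm_num) (by norm_num),
      isDist_row (by norm_num) (by norm_num) (by norm_num) (by norm_num),
      isDist_row (by norm_num) (by norm_num) (by norm_num) (by norm_num),
      isDist_row (by norm_num) (by norm_num) (by norm_num) (by norm_num)]
  · intro d d' h
    rcases h with rfl | rfl
    · fin_cases d
      exacts [e0, e1, e2, e3, e4]
    · fin_cases d'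
      exacts [close_symm e0, close_symm e1, close_symm e2, close_symm e3, close_symm e4]

end Aux

/-- nonexistence of an optimal mechanism for a non-homogeneous boundary
condition: (a) there exists an `(ln 2, 0)`-DP mechanism on the 5-cycle satisfying both
constraints, and (b) no such mechanism dominates (w.r.t. the preference vectors induced by
the rainbows) every such mechanism. -/
theorem no_optimal_mechanism :
    (∃ M : Fin 5 → Fin 3 → ℝ, GoodMech M) ∧
    ¬ ∃ M : Fin 5 → Fin 3 → ℝ, GoodMech M ∧
        ∀ M' : Fin 5 → Fin 3 → ℝ, GoodMech M' →
          ∀ d : Fin 5,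
            Dom 3 (fun k => M' d (rainbow5 d k)) (fun k => M d (rainbow5 d k))  := by
  constructor
  · exact ⟨mechA, goodA⟩
  · rintro ⟨M, hM, hdom⟩
    obtain ⟨hdist, hclose, hM0, hM3⟩ := hM
    -- From dominating A at d₃ (index 2): M 2 0 ≥ 0.7
    have hr2 : rainbow5 2 = 1 := if_neg (by decide)
    have hA := hdom mechA goodA 2 1 (by norm_num)
    rw [prefixSum_one, prefixSum_one] at hA
    simp only [hr2, Equiv.Perm.one_apply] at hA
    have hM20 : (0.7 : ℝ) ≤ M 2 0 := by
      have : mechA 2 0 = 0.7 := by norm_num [mechA, Matrix.cons_val_two]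
      linarith [hA, this.symm.le.trans hA]
    -- From dominating B at d₂ (index 1): M 1 0 + M 1 1 ≥ 0.6
    have hr1 : rainbow5 1 = 1 := if_neg (by decide)
    have hB := hdom mechB goodB 1 2 (by norm_num)
    rw [prefixSum_two, prefixSum_two] at hB
    simp only [hr1, Equiv.Perm.one_apply] at hB
    have hM1sum : (0.6 : ℝ) ≤ M 1 0 + M 1 1 := by
      have e0 : mechB 1 0 = 0.4 := by norm_num [mechB]
      have e1 : mechB 1 1 = 0.2 := by norm_num [mechB]
      rw [e0, e1] at hB
      linarith
    -- Closeness facts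
    have hexp := exp_log_two
    have c23 := hclose 2 3 (Or.inl rfl)
    have c12 := hclose 1 2 (Or.inl rfl)
    have c01 := hclose 0 1 (Or.inl rfl)
    -- M 3 values
    have hM31 : M 3 1 = 0.1 := by rw [hM3]; norm_num
    have hM32 : M 3 2 = 0.5 := by rw [hM3]; norm_num [Matrix.cons_val_two]
    have hM00 : M 0 0 = 0.2 := by rw [hM0]; norm_num
    -- M 2 1 ≥ 0.05
    have h1 := (c23 {1}).2
    rw [Finset.sum_singleton, Finset.sum_singleton, hexp, hM31, add_zero] at h1
    -- M 2 2 ≥ 0.25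
    have h2 := (c23 {2}).2
    rw [Finset.sum_singleton, Finset.sum_singleton, hexp, hM32, add_zero] at h2
    -- sum of M 2 is 1
    have hsum2 : M 2 0 + M 2 1 + M 2 2 = 1 := by
      have := (hdist 2).2
      rwa [Fin.sum_univ_three] at this
    -- hence M 2 1 ≤ 0.05
    have hM21 : M 2 1 ≤ 0.05 := by linarith
    -- M 1 1 ≤ 2 * M 2 1 ≤ 0.1
    have h3 := (c12 {1}).1
    rw [Finset.sum_singleton, Finset.sum_singleton, hexp, add_zero] at h3
    -- M 1 0 ≤ 2 * M 0 0 = 0.4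
    have h4 := (c01 {0}).2
    rw [Finset.sum_singleton, Finset.sum_singleton, hexp, hM00, add_zero] at h4
    linarith
end
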